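/- Let 0 < a < b be real numbers, let n, m be natural numbers, let φ : ℝ → ℂ be n-times continuously differentiable on [a,b] with φ^{(j)}(a) = φ^{(j)}(b) = 0 for every j with 0 ≤ j ≤ n−1, and let a_{λ,r} ∈ ℂ (for 0 ≤ λ ≤ m, 0 ≤ r ≤ n) be constants such that Σ_{r=0}^{n} Σ_{λ=0}^{m} a_{λ,r}·y^λ·φ^{(r)}(y) = 0 for every y ∈ [a,b]. Define f : ℂ → ℂ by f(x) := ∫_a^b φ(y)·y^{x−1} dy, where y^w = exp(w·log y) for y > 0. Then for every x ∈ ℂ: Σ_{r=0}^{n} Σ_{λ=0}^{m} (−1)^r·a_{λ,r}·( ∏_{i=1}^{r} (x+λ−i) )·f(x+λ−r) = 0. -/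

import Mathlib

open Set intervalIntegral

/-- Pincherle's transformation [Pincherle, 1886a]: the Mellin-type transform
f(x) = ∫ φ(y)·y^{x−1} dy carries a solution φ of the differential equation
Σ a_{λ,r}·y^λ·φ^{(r)} = 0 (with vanishing boundary terms) into a solution of the
difference equation Σ (−1)^r a_{λ,r}·(x+λ−1)⋯(x+λ−r)·f(x+λ−r) = 0. -/
theorem pincherle_mellin_transform (a b : ℝ) (ha : 0 < a) (hab : a < b)
    (n m : ℕ) (φ : ℝ → ℂ)
    (hφ : ContDiffOn ℝ n φ (Set.Icc a b))
    (hbd : ∀ j : ℕ, j < n → iteratedDerivWithin j φ (Set.Icc a b) a = 0 ∧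
      iteratedDerivWithin j φ (Set.Icc a b) b = 0)
    (A : ℕ → ℕ → ℂ)
    (hode : ∀ y ∈ Set.Icc a b,
      ∑ r ∈ Finset.range (n + 1), ∑ l ∈ Finset.range (m + 1),
        A l r * (y : ℂ) ^ l * iteratedDerivWithin r φ (Set.Icc a b) y = 0)
    (f : ℂ → ℂ)
    (hf : ∀ x : ℂ,
      f x = ∫ y in a..b, φ y * Complex.exp ((x - 1) * (Real.log y : ℂ))) :
    ∀ x : ℂ, ∑ r ∈ Finset.range (n + 1), ∑ l ∈ Finset.range (m + 1),
      (-1 : ℂ) ^ r * A l r *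
        (∏ i ∈ Finset.range r, (x + (l : ℂ) - ((i : ℂ) + 1))) *
        f (x + (l : ℂ) - (r : ℂ)) = 0 := by
  intro x
  set s := Set.Icc a b with hs_def
  have hs : UniqueDiffOn ℝ s := uniqueDiffOn_Icc hab
  have huIcc : (Set.uIcc a b) = s := uIcc_of_le hab.le
  -- continuity of the power kernel
  have contPow : ∀ w : ℂ, ContinuousOn (fun y : ℝ => Complex.exp (w * (Real.log y : ℂ))) s := by
    intro w
    apply ContinuousOn.cexp
    apply continuousOn_const.mul
    apply Complex.continuous_ofReal.comp_continuousOn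
    intro y hy
    exact (Real.continuousAt_log (by linarith [hy.1] : y ≠ 0)).continuousWithinAt
  -- continuity of iterated derivatives
  have contIter : ∀ r : ℕ, r ≤ n → ContinuousOn (iteratedDerivWithin r φ s) s := fun r hr =>
    hφ.continuousOn_iteratedDerivWithin (by exact_mod_cast hr) hs
  -- integrability
  have intg : ∀ r : ℕ, r ≤ n → ∀ w : ℂ,
      IntervalIntegrable (fun y => iteratedDerivWithin r φ s y * Complex.exp (w * (Real.log y : ℂ)))
        MeasureTheory.volume a b := by
    intro r hr w
    apply ContinuousOn.intervalIntegrable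
    rw [huIcc]
    exact (contIter r hr).mul (contPow w)
  have intgφ : ∀ w : ℂ,
      IntervalIntegrable (fun y => φ y * Complex.exp (w * (Real.log y : ℂ)))
        MeasureTheory.volume a b := by
    intro w
    have := intg 0 (Nat.zero_le n) w
    simpa [iteratedDerivWithin_zero] using this
  -- derivative of the power kernel
  have derivPow : ∀ w : ℂ, ∀ y ∈ Set.Ioo a b,
      HasDerivAt (fun y : ℝ => Complex.exp (w * (Real.log y : ℂ)))
        (w * Complex.exp ((w - 1) * (Real.log y : ℂ))) y := by
    intro w y hy
    have hy0 : 0 < y := lt_trans ha hy.1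
    have h1 : HasDerivAt (fun y : ℝ => ((Real.log y : ℝ) : ℂ)) ((y⁻¹ : ℝ) : ℂ) y :=
      (Real.hasDerivAt_log hy0.ne').ofReal_comp
    have h2 : HasDerivAt (fun y : ℝ => w * ((Real.log y : ℝ) : ℂ)) (w * ((y⁻¹ : ℝ) : ℂ)) y :=
      h1.const_mul w
    have h3 := h2.cexp
    convert h3 using 1
    have hey : Complex.exp ((Real.log y : ℂ)) = (y : ℂ) := by
      rw [← Complex.ofReal_exp, Real.exp_log hy0]
    have hyne : (y : ℂ) ≠ 0 := by exact_mod_cast hy0.ne'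
    rw [sub_mul, Complex.exp_sub, one_mul, hey]
    field_simp
    rw [one_div, Complex.ofReal_inv, mul_assoc, mul_inv_cancel₀ hyne, mul_one]
  -- derivative of iterated derivatives at interior points
  have derivIter : ∀ r : ℕ, r < n → ∀ y ∈ Set.Ioo a b,
      HasDerivAt (iteratedDerivWithin r φ s) (iteratedDerivWithin (r + 1) φ s y) y := by
    intro r hr y hy
    have hys : y ∈ s := Ioo_subset_Icc_self hy
    have hdiff : DifferentiableWithinAt ℝ (iteratedDerivWithin r φ s) s y :=
      hφ.differentiableOn_iteratedDerivWithin (by exact_mod_cast hr) hs y hys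
    have hdw : HasDerivWithinAt (iteratedDerivWithin r φ s)
        (iteratedDerivWithin (r + 1) φ s y) s y := by
      rw [iteratedDerivWithin_succ]
      exact hdiff.hasDerivWithinAt
    exact hdw.hasDerivAt (Icc_mem_nhds hy.1 hy.2)
  -- key integration-by-parts identity
  have key : ∀ r : ℕ, r ≤ n → ∀ w : ℂ,
      (∫ y in a..b, iteratedDerivWithin r φ s y * Complex.exp (w * (Real.log y : ℂ))) =
      (-1 : ℂ) ^ r * (∏ i ∈ Finset.range r, (w - (i : ℂ))) *
        ∫ y in a..b, φ y * Complex.exp ((w - (r : ℂ)) * (Real.log y : ℂ)) := by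
    intro r
    induction r with
    | zero => intro _ w; simp [iteratedDerivWithin_zero]
    | succ r ih =>
      intro hr w
      have hrn : r < n := Nat.lt_of_succ_le hr
      -- integration by parts
      have hu : ContinuousOn (fun y : ℝ => Complex.exp (w * (Real.log y : ℂ))) (Set.uIcc a b) := by
        rw [huIcc]; exact contPow w
      have hv : ContinuousOn (iteratedDerivWithin r φ s) (Set.uIcc a b) := by
        rw [huIcc]; exact contIter r hrn.le
      have hmin : min a b = a := min_eq_left hab.le
      have hmax : max a b = b := max_eq_right hab.le
      have hu' : IntervalIntegrable (fun y : ℝ => w * Complex.exp ((w - 1) * (Real.log y : ℂ)))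
          MeasureTheory.volume a b := by
        apply ContinuousOn.intervalIntegrable
        rw [huIcc]
        exact continuousOn_const.mul (contPow (w - 1))
      have hv' : IntervalIntegrable (iteratedDerivWithin (r + 1) φ s)
          MeasureTheory.volume a b := by
        apply ContinuousOn.intervalIntegrable
        rw [huIcc]
        exact contIter (r + 1) hr
      have parts := integral_deriv_mul_eq_sub_of_hasDerivAt (a := a) (b := b)
        (u := fun y : ℝ => Complex.exp (w * (Real.log y : ℂ)))
        (v := iteratedDerivWithin r φ s)
        (u' := fun y : ℝ => w * Complex.exp ((w - 1) * (Real.log y : ℂ)))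
        (v' := iteratedDerivWithin (r + 1) φ s)
        hu hv
        (by rw [hmin, hmax]; exact fun y hy => derivPow w y hy)
        (by rw [hmin, hmax]; exact fun y hy => derivIter r hrn y hy)
        hu' hv'
      rw [(hbd r hrn).1, (hbd r hrn).2, mul_zero, mul_zero, sub_zero] at parts
      have hsplit : (∫ y in a..b,
          (w * Complex.exp ((w - 1) * (Real.log y : ℂ)) * iteratedDerivWithin r φ s y +
            Complex.exp (w * (Real.log y : ℂ)) * iteratedDerivWithin (r + 1) φ s y)) =
          (∫ y in a..b, w * Complex.exp ((w - 1) * (Real.log y : ℂ)) * iteratedDerivWithin r φ s y)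
          + ∫ y in a..b, Complex.exp (w * (Real.log y : ℂ)) * iteratedDerivWithin (r + 1) φ s y := by
        apply intervalIntegral.integral_add
        · exact hu'.mul_continuousOn (by rw [huIcc]; exact contIter r hrn.le)
        · apply ContinuousOn.intervalIntegrable
          rw [huIcc]
          exact (contPow w).mul (contIter (r + 1) hr)
      rw [hsplit] at parts
      have e1 : (∫ y in a..b,
          Complex.exp (w * (Real.log y : ℂ)) * iteratedDerivWithin (r + 1) φ s y) =
          ∫ y in a..b, iteratedDerivWithin (r + 1) φ s y * Complex.exp (w * (Real.log y : ℂ)) := by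
        congr 1; funext y; ring
      have e2 : (∫ y in a..b,
          w * Complex.exp ((w - 1) * (Real.log y : ℂ)) * iteratedDerivWithin r φ s y) =
          w * ∫ y in a..b, iteratedDerivWithin r φ s y *
            Complex.exp ((w - 1) * (Real.log y : ℂ)) := by
        rw [← intervalIntegral.integral_const_mul]
        congr 1; funext y; ring
      rw [e1, e2] at parts
      have hmain : (∫ y in a..b,
          iteratedDerivWithin (r + 1) φ s y * Complex.exp (w * (Real.log y : ℂ))) =
          -(w * ∫ y in a..b, iteratedDerivWithin r φ s y *
            Complex.exp ((w - 1) * (Real.log y : ℂ))) := by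
        linear_combination parts
      rw [hmain, ih hrn.le (w - 1)]
      have harg : w - 1 - (r : ℂ) = w - ((r : ℕ) + 1 : ℕ) := by push_cast; ring
      rw [harg]
      have hprod : (∏ i ∈ Finset.range (r + 1), (w - (i : ℂ))) =
          (∏ i ∈ Finset.range r, (w - 1 - (i : ℂ))) * w := by
        rw [Finset.prod_range_succ']
        simp only [Nat.cast_add, Nat.cast_one, Nat.cast_zero, sub_zero]
        congr 1
        exact Finset.prod_congr rfl fun i _ => by ring
      rw [hprod]
      ring
  -- rewrite each term of the sum via the key identity
  have hterm : ∀ r ∈ Finset.range (n + 1), ∀ l ∈ Finset.range (m + 1),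
      (-1 : ℂ) ^ r * A l r *
        (∏ i ∈ Finset.range r, (x + (l : ℂ) - ((i : ℂ) + 1))) *
        f (x + (l : ℂ) - (r : ℂ)) =
      A l r * ∫ y in a..b, iteratedDerivWithin r φ s y *
        Complex.exp ((x + (l : ℂ) - 1) * (Real.log y : ℂ)) := by
    intro r hr l hl
    have hrn : r ≤ n := Nat.lt_succ_iff.mp (Finset.mem_range.mp hr)
    rw [key r hrn (x + (l : ℂ) - 1)]
    have hfval : f (x + (l : ℂ) - (r : ℂ)) =
        ∫ y in a..b, φ y * Complex.exp ((x + (l : ℂ) - 1 - (r : ℂ)) * (Real.log y : ℂ)) := by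
      rw [hf]
      congr 1; funext y
      rw [show x + (l : ℂ) - (r : ℂ) - 1 = x + (l : ℂ) - 1 - (r : ℂ) from by ring]
    have hprod : (∏ i ∈ Finset.range r, (x + (l : ℂ) - ((i : ℂ) + 1))) =
        ∏ i ∈ Finset.range r, (x + (l : ℂ) - 1 - (i : ℂ)) :=
      Finset.prod_congr rfl fun i _ => by ring
    rw [hfval, hprod]
    ring
  rw [Finset.sum_congr rfl (fun r hr => Finset.sum_congr rfl (fun l hl => hterm r hr l hl))]
  -- pull the sums inside the integral
  have hswap : ∀ r ∈ Finset.range (n + 1),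
      (∑ l ∈ Finset.range (m + 1), A l r * ∫ y in a..b, iteratedDerivWithin r φ s y *
        Complex.exp ((x + (l : ℂ) - 1) * (Real.log y : ℂ))) =
      ∫ y in a..b, ∑ l ∈ Finset.range (m + 1), A l r * (iteratedDerivWithin r φ s y *
        Complex.exp ((x + (l : ℂ) - 1) * (Real.log y : ℂ))) := by
    intro r hr
    rw [intervalIntegral.integral_finset_sum]
    · exact Finset.sum_congr rfl fun l _ => (intervalIntegral.integral_const_mul _ _).symm
    · intro l _
      exact (intg r (Nat.lt_succ_iff.mp (Finset.mem_range.mp hr)) (x + (l : ℂ) - 1)).const_mul _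
  rw [Finset.sum_congr rfl hswap, ← intervalIntegral.integral_finset_sum]
  · rw [← intervalIntegral.integral_zero (a := a) (b := b) (E := ℂ)]
    apply intervalIntegral.integral_congr
    intro y hy
    rw [huIcc] at hy
    have hy0 : 0 < y := lt_of_lt_of_le ha hy.1
    have hpow : ∀ l : ℕ, Complex.exp ((x + (l : ℂ) - 1) * (Real.log y : ℂ)) =
        (y : ℂ) ^ l * Complex.exp ((x - 1) * (Real.log y : ℂ)) := by
      intro l
      rw [show (x + (l : ℂ) - 1) * (Real.log y : ℂ) =
        (l : ℂ) * (Real.log y : ℂ) + (x - 1) * (Real.log y : ℂ) from by ring,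
        Complex.exp_add, Complex.exp_nat_mul,
        show Complex.exp ((Real.log y : ℂ)) = (y : ℂ) from by
          rw [← Complex.ofReal_exp, Real.exp_log hy0]]
    have := hode y hy
    calc (∑ r ∈ Finset.range (n + 1), ∑ l ∈ Finset.range (m + 1),
          A l r * (iteratedDerivWithin r φ s y *
            Complex.exp ((x + (l : ℂ) - 1) * (Real.log y : ℂ))))
        = (∑ r ∈ Finset.range (n + 1), ∑ l ∈ Finset.range (m + 1),
            A l r * (y : ℂ) ^ l * iteratedDerivWithin r φ s y) *
            Complex.exp ((x - 1) * (Real.log y : ℂ)) := by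
          rw [Finset.sum_mul]
          refine Finset.sum_congr rfl fun r _ => ?_
          rw [Finset.sum_mul]
          refine Finset.sum_congr rfl fun l _ => ?_
          rw [hpow l]; ring
      _ = 0 := by rw [this, zero_mul]
  · intro r hr
    apply ContinuousOn.intervalIntegrable
    rw [huIcc]
    apply continuousOn_finset_sum
    intro l _
    exact continuousOn_const.mul
      ((contIter r (Nat.lt_succ_iff.mp (Finset.mem_range.mp hr))).mul (contPow (x + (l : ℂ) - 1)))
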